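/- In the paging model, the Furthest-in-the-Future algorithm, which on a page fault evicts the cached page whose next request occurs latest in the future (or never), minimizes the total number of page faults over all algorithms with the same cache size. -/

import Mathlib

/-- A (demand-)paging schedule for cache size `h` serving the request
sequence `z`: `cache i` is the cache contents just before serving the `i`-th
request.  The cache starts empty, never holds more than `h` pages, the
requested page is in the cache after serving it, and pages enter the cache
only when requested. -/
structure PagingSchedule (h : ℕ) (z : List ℕ) where
  cache : ℕ → Finset ℕ
  init : cache 0 = ∅
  card_le : ∀ i, (cache i).card ≤ h
  serves : ∀ i, i < z.length → z.getD i 0 ∈ cache (i + 1)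
  moves : ∀ i, i < z.length → cache (i + 1) ⊆ cache i ∪ {z.getD i 0}

/-- The number of page faults incurred by a paging schedule on `z`. -/
def schedFaults {h : ℕ} {z : List ℕ} (S : PagingSchedule h z) : ℕ :=
  ((List.range z.length).filter
    fun i => decide (z.getD i 0 ∉ S.cache i)).length

/-- The minimum number of page faults needed to serve `z` with a cache of
size `h` (the performance of the optimal offline algorithm). -/
noncomputable def optFaults (h : ℕ) (z : List ℕ) : ℕ :=
  sInf {n | ∃ S : PagingSchedule h z, schedFaults S = n}

/-- The position (relative to the suffix after time `i`) of the next request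
of page `q` strictly after time `i`; equals the length of that suffix if `q`
is never requested again. -/
def nextReq (z : List ℕ) (i : ℕ) (q : ℕ) : ℕ :=
  (z.drop (i + 1)).findIdx (· == q)

/-- The schedule `S` follows the Furthest-in-the-Future rule: the cache is
unchanged when the requested page is present; on a fault the requested page
is brought in, and if the cache is full the evicted page is one whose next
request occurs latest in the future (or never). -/
def IsFIF (k : ℕ) (z : List ℕ) (S : PagingSchedule k z) : Prop :=
  ∀ i, i < z.length →
    (z.getD i 0 ∈ S.cache i → S.cache (i + 1) = S.cache i) ∧
    (z.getD i 0 ∉ S.cache i → (S.cache i).card < k →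
      S.cache (i + 1) = insert (z.getD i 0) (S.cache i)) ∧
    (z.getD i 0 ∉ S.cache i → (S.cache i).card = k →
      ∃ q ∈ S.cache i,
        S.cache (i + 1) = insert (z.getD i 0) (S.cache i \ {q}) ∧
        ∀ q' ∈ S.cache i, nextReq z i q' ≤ nextReq z i q)

noncomputable def optR (k : ℕ) : List ℕ → Finset ℕ → ℕ
  | [], _ => 0
  | p :: w, C => (if p ∈ C then 0 else 1) +
      sInf ((fun D => optR k w D) '' {D | D ⊆ insert p C ∧ p ∈ D ∧ D.card ≤ k})

theorem optR_nil (k : ℕ) (C : Finset ℕ) : optR k [] C = 0 := rfl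

theorem optR_le (k : ℕ) (p : ℕ) (w : List ℕ) (C D : Finset ℕ)
    (h1 : D ⊆ insert p C) (h2 : p ∈ D) (h3 : D.card ≤ k) :
    optR k (p :: w) C ≤ (if p ∈ C then 0 else 1) + optR k w D := by
  show (if p ∈ C then 0 else 1) + sInf _ ≤ _
  refine Nat.add_le_add_left (Nat.sInf_le ?_) _
  exact Set.mem_image_of_mem _ (show D ∈ {D | D ⊆ insert p C ∧ p ∈ D ∧ D.card ≤ k} from ⟨h1, h2, h3⟩)

theorem optR_spec (k : ℕ) (hk : 1 ≤ k) (p : ℕ) (w : List ℕ) (C : Finset ℕ) :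
    ∃ D, D ⊆ insert p C ∧ p ∈ D ∧ D.card ≤ k ∧
      optR k (p :: w) C = (if p ∈ C then 0 else 1) + optR k w D := by
  have hne : ((fun D => optR k w D) '' {D | D ⊆ insert p C ∧ p ∈ D ∧ D.card ≤ k}).Nonempty :=
    ⟨optR k w {p}, {p}, ⟨by simp, by simp, by simpa⟩, rfl⟩
  obtain ⟨D, ⟨h1, h2, h3⟩, hD⟩ := Nat.sInf_mem hne
  exact ⟨D, h1, h2, h3, by rw [show optR k (p::w) C = _ + sInf _ from rfl, ← hD]⟩

theorem optR_mono (k : ℕ) (hk : 1 ≤ k) (w : List ℕ) (C C' : Finset ℕ) (h : C ⊆ C') :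
    optR k w C' ≤ optR k w C := by
  cases w with
  | nil => exact le_refl _
  | cons p w =>
    obtain ⟨D, h1, h2, h3, hEq⟩ := optR_spec k hk p w C
    rw [hEq]
    refine le_trans (optR_le k p w C' D (h1.trans (Finset.insert_subset_insert _ h)) h2 h3) ?_
    gcongr
    split <;> split <;> simp_all [h _]

theorem optR_slack (k : ℕ) (hk : 1 ≤ k) (w : List ℕ) :
    ∀ (C C' : Finset ℕ) (e : ℕ), C \ C' ⊆ {e} → optR k w C' ≤ optR k w C + 1 := by
  induction w with
  | nil => intro C C' e h; simp [optR_nil]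
  | cons p w ih =>
    intro C C' e h
    obtain ⟨D, h1, h2, h3, hEq⟩ := optR_spec k hk p w C
    rw [hEq]
    by_cases hpe : p = e
    · subst hpe
      -- D is valid for C' too
      have h1' : D ⊆ insert p C' := by
        intro x hx
        rcases Finset.mem_insert.1 (h1 hx) with hx' | hx'
        · simp [hx']
        · by_cases hxC' : x ∈ C'
          · simp [hxC']
          · have := h (Finset.mem_sdiff.2 ⟨hx', hxC'⟩)
            simp only [Finset.mem_singleton] at this
            simp [this]
      refine le_trans (optR_le k p w C' D h1' h2 h3) ?_
      have : (if p ∈ C' then 0 else 1) ≤ (if p ∈ C then 0 else 1) + 1 := by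
        split <;> split <;> omega
      omega
    · -- p ≠ e; use D'' = D \ {e}, and fault' ≤ fault
      have hf : (if p ∈ C' then (0:ℕ) else 1) ≤ (if p ∈ C then 0 else 1) := by
        by_cases hpC : p ∈ C
        · have hpC' : p ∈ C' := by
            by_contra hn
            have := h (Finset.mem_sdiff.2 ⟨hpC, hn⟩)
            simp only [Finset.mem_singleton] at this
            exact hpe this
          simp [hpC, hpC']
        · split <;> simp
      have h1' : D \ {e} ⊆ insert p C' := by
        intro x hx
        obtain ⟨hxD, hxe⟩ := Finset.mem_sdiff.1 hx
        simp only [Finset.mem_singleton] at hxe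
        rcases Finset.mem_insert.1 (h1 hxD) with hx' | hx'
        · simp [hx']
        · by_cases hxC' : x ∈ C'
          · simp [hxC']
          · have := h (Finset.mem_sdiff.2 ⟨hx', hxC'⟩)
            simp only [Finset.mem_singleton] at this
            exact absurd this hxe
      have h2' : p ∈ D \ {e} := Finset.mem_sdiff.2 ⟨h2, by simpa using hpe⟩
      have h3' : (D \ {e}).card ≤ k := le_trans (Finset.card_le_card Finset.sdiff_subset) h3
      refine le_trans (optR_le k p w C' (D \ {e}) h1' h2' h3') ?_
      have hIH := ih D (D \ {e}) e (by intro x hx; obtain ⟨a,b⟩ := Finset.mem_sdiff.1 hx; simp_all)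
      omega

theorem optR_exchange (k : ℕ) (hk : 1 ≤ k) (w : List ℕ) :
    ∀ (B : Finset ℕ) (d e : ℕ), e ∈ B → d ∉ B →
      w.findIdx (· == d) ≤ w.findIdx (· == e) →
      optR k w (insert d (B \ {e})) ≤ optR k w B := by
  induction w with
  | nil => intro B d e _ _ _; exact le_refl _
  | cons p w ih =>
    intro B d e heB hdB hidx
    have hde : d ≠ e := fun h => hdB (h ▸ heB)
    set A : Finset ℕ := insert d (B \ {e}) with hA
    obtain ⟨D, h1, h2, h3, hEq⟩ := optR_spec k hk p w B
    rw [hEq]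
    by_cases hpe : p = e
    · -- impossible: e would be requested first
      exfalso
      subst hpe
      simp only [List.findIdx_cons, beq_self_eq_true, cond_true,
        beq_eq_false_iff_ne, ne_eq] at hidx
      have : (p == d) = false := beq_false_of_ne (fun h => hde h.symm)
      rw [this] at hidx
      simp at hidx
    by_cases hpd : p = d
    · -- fault in B, no fault in A; use D \ {e}
      subst hpd
      have hfB : (if p ∈ B then (0:ℕ) else 1) = 1 := if_neg hdB
      have hfA : (if p ∈ A then (0:ℕ) else 1) = 0 := if_pos (Finset.mem_insert_self _ _)
      have h1' : D \ {e} ⊆ insert p A := by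
        intro x hx
        obtain ⟨hxD, hxe⟩ := Finset.mem_sdiff.1 hx
        simp only [Finset.mem_singleton] at hxe
        rcases Finset.mem_insert.1 (h1 hxD) with hx' | hx'
        · simp [hx']
        · exact Finset.mem_insert_of_mem (Finset.mem_insert_of_mem
            (Finset.mem_sdiff.2 ⟨hx', by simpa using hxe⟩))
      have h2' : p ∈ D \ {e} := Finset.mem_sdiff.2 ⟨h2, by simpa using hpe⟩
      have h3' : (D \ {e}).card ≤ k := le_trans (Finset.card_le_card Finset.sdiff_subset) h3
      have hstep := optR_le k p w A (D \ {e}) h1' h2' h3'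
      have hslack := optR_slack k hk w D (D \ {e}) e
        (by intro x hx; obtain ⟨a,b⟩ := Finset.mem_sdiff.1 hx; simp_all)
      rw [hfA] at hstep
      rw [hfB]
      omega
    · -- p differs from d and e
      have hfe : (if p ∈ A then (0:ℕ) else 1) = (if p ∈ B then 0 else 1) := by
        have : p ∈ A ↔ p ∈ B := by
          simp only [hA, Finset.mem_insert, Finset.mem_sdiff, Finset.mem_singleton]
          constructor
          · rintro (h | ⟨h, _⟩)
            · exact absurd h hpd
            · exact h
          · intro h; exact Or.inr ⟨h, hpe⟩
        simp [this]
      have hidx' : w.findIdx (· == d) ≤ w.findIdx (· == e) := by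
        have hd : (p == d) = false := beq_false_of_ne hpd
        have he : (p == e) = false := beq_false_of_ne hpe
        simp only [List.findIdx_cons, hd, he, cond_false] at hidx
        omega
      have hdD : d ∉ D := fun h => by
        rcases Finset.mem_insert.1 (h1 h) with h' | h'
        · exact hpd h'.symm
        · exact hdB h'
      by_cases heD : e ∈ D
      · -- exchange inside D, apply IH
        have hIH := ih D d e heD hdD hidx'
        have h1' : insert d (D \ {e}) ⊆ insert p A := by
          intro x hx
          rcases Finset.mem_insert.1 hx with hx' | hx'
          · exact hx' ▸ Finset.mem_insert_of_mem (Finset.mem_insert_self _ _)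
          · obtain ⟨hxD, hxe⟩ := Finset.mem_sdiff.1 hx'
            simp only [Finset.mem_singleton] at hxe
            rcases Finset.mem_insert.1 (h1 hxD) with h' | h'
            · simp [h']
            · exact Finset.mem_insert_of_mem (Finset.mem_insert_of_mem
                (Finset.mem_sdiff.2 ⟨h', by simpa using hxe⟩))
        have h2' : p ∈ insert d (D \ {e}) :=
          Finset.mem_insert_of_mem (Finset.mem_sdiff.2 ⟨h2, by simpa using hpe⟩)
        have h3' : (insert d (D \ {e})).card ≤ k := by
          have hcard : (D \ {e}).card < D.card :=
            Finset.card_lt_card (Finset.sdiff_ssubset (by simpa using heD) (by simp))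
          have := Finset.card_insert_le d (D \ {e})
          omega
        have hstep := optR_le k p w A (insert d (D \ {e})) h1' h2' h3'
        rw [hfe] at hstep
        omega
      · -- D itself works for A
        have h1' : D ⊆ insert p A := by
          intro x hx
          rcases Finset.mem_insert.1 (h1 hx) with h' | h'
          · simp [h']
          · refine Finset.mem_insert_of_mem (Finset.mem_insert_of_mem
              (Finset.mem_sdiff.2 ⟨h', ?_⟩))
            simp only [Finset.mem_singleton]
            exact fun hxe => heD (hxe ▸ hx)
        have hstep := optR_le k p w A D h1' h2 h3
        rw [hfe] at hstep
        omega


theorem len_filter_range (f : ℕ → Bool) (n : ℕ) :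
    ((List.range n).filter f).length = ∑ j ∈ Finset.range n, (if f j then 1 else 0) := by
  induction n with
  | zero => simp
  | succ n ih =>
    rw [List.range_succ, List.filter_append, Finset.sum_range_succ, List.length_append, ih]
    cases h : f n <;> simp [h]

theorem schedFaults_eq_sum {k : ℕ} {z : List ℕ} (S : PagingSchedule k z) :
    schedFaults S = ∑ j ∈ Finset.range z.length,
      (if z.getD j 0 ∈ S.cache j then 0 else 1) := by
  rw [schedFaults, len_filter_range]
  refine Finset.sum_congr rfl fun j _ => ?_
  by_cases h : z.getD j 0 ∈ S.cache j <;> simp [h]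

theorem optR_le_sched {k : ℕ} {z : List ℕ} (hk : 1 ≤ k) (S : PagingSchedule k z) :
    ∀ n i, i + n = z.length →
      optR k (z.drop i) (S.cache i) ≤
        ∑ j ∈ Finset.Ico i z.length, (if z.getD j 0 ∈ S.cache j then 0 else 1) := by
  intro n
  induction n with
  | zero =>
    intro i hi
    rw [List.drop_of_length_le (by omega)]
    exact Nat.zero_le _
  | succ n ih =>
    intro i hi
    have hlt : i < z.length := by omega
    have hdrop : z.drop i = z.getD i 0 :: z.drop (i + 1) := by
      rw [List.drop_eq_getElem_cons hlt, List.getD_eq_getElem z 0 hlt]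
    rw [hdrop]
    have h1 : S.cache (i + 1) ⊆ insert (z.getD i 0) (S.cache i) := by
      refine (S.moves i hlt).trans ?_
      rw [Finset.insert_eq, Finset.union_comm]
    have hle := optR_le k (z.getD i 0) (z.drop (i + 1)) (S.cache i) (S.cache (i + 1))
      h1 (S.serves i hlt) (S.card_le (i + 1))
    have hIH := ih (i + 1) (by omega)
    rw [Finset.sum_eq_sum_Ico_succ_bot hlt]
    omega

theorem fif_le_optR {k : ℕ} {z : List ℕ} (hk : 1 ≤ k) (F : PagingSchedule k z)
    (hF : IsFIF k z F) :
    ∀ n i, i + n = z.length →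
      (∑ j ∈ Finset.Ico i z.length, (if z.getD j 0 ∈ F.cache j then 0 else 1)) ≤
        optR k (z.drop i) (F.cache i) := by
  intro n
  induction n with
  | zero =>
    intro i hi
    have he : Finset.Ico i z.length = ∅ := by
      rw [show z.length = i by omega]; exact Finset.Ico_self i
    simp [he]
  | succ n ih =>
    intro i hi
    have hlt : i < z.length := by omega
    set p := z.getD i 0 with hp
    set C := F.cache i with hC
    have hdrop : z.drop i = p :: z.drop (i + 1) := by
      rw [List.drop_eq_getElem_cons hlt, hp, List.getD_eq_getElem z 0 hlt]
    rw [hdrop, Finset.sum_eq_sum_Ico_succ_bot hlt]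
    obtain ⟨D, h1, h2, h3, hEq⟩ := optR_spec k hk p (z.drop (i + 1)) C
    rw [hEq]
    have hIH := ih (i + 1) (by omega)
    by_cases hpC : p ∈ C
    · -- no fault, cache unchanged
      have hcc : F.cache (i + 1) = C := (hF i hlt).1 hpC
      have hsub : D ⊆ F.cache (i + 1) := by
        rw [hcc]; rwa [Finset.insert_eq_self.2 hpC] at h1
      have hmono := optR_mono k hk (z.drop (i + 1)) D (F.cache (i + 1)) hsub
      simp only [← hp, ← hC, if_pos hpC]
      omega
    · by_cases hcard : C.card < k
      · -- fault, room in cache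
        have hcc : F.cache (i + 1) = insert p C := ((hF i hlt).2.1) hpC hcard
        have hmono := optR_mono k hk (z.drop (i + 1)) D (F.cache (i + 1)) (hcc ▸ h1)
        simp only [← hp, ← hC, if_neg hpC]
        omega
      · -- fault, cache full: the FIF exchange
        have hcard' : C.card = k := le_antisymm (F.card_le i) (by omega)
        obtain ⟨q, hqC, hcc, hmax⟩ := ((hF i hlt).2.2) hpC hcard'
        -- find e ∈ insert p C with e ∉ D
        have hns : ¬ insert p C ⊆ D := by
          intro hsub
          have := Finset.card_le_card hsub
          rw [Finset.card_insert_of_notMem hpC, hcard'] at this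
          omega
        obtain ⟨e, heI, heD⟩ := Finset.not_subset.1 hns
        have hep : e ≠ p := fun h => heD (h ▸ h2)
        have heC : e ∈ C := (Finset.mem_insert.1 heI).resolve_left hep
        have hsubA : D ⊆ insert p (C \ {e}) := by
          intro x hx
          rcases Finset.mem_insert.1 (h1 hx) with h' | h'
          · simp [h']
          · exact Finset.mem_insert_of_mem (Finset.mem_sdiff.2 ⟨h',
              by simp only [Finset.mem_singleton]; exact fun hxe => heD (hxe ▸ hx)⟩)
        have hmono := optR_mono k hk (z.drop (i + 1)) D (insert p (C \ {e})) hsubA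
        have hfinal : optR k (z.drop (i + 1)) (F.cache (i + 1)) ≤
            optR k (z.drop (i + 1)) (insert p (C \ {e})) := by
          by_cases hqe : q = e
          · rw [hcc, hqe]
          · have hpq : p ≠ q := fun h => hpC (h ▸ hqC)
            have heA : e ∉ insert p (C \ {e}) := by
              simp [hep, Finset.mem_sdiff]
            have hqA : q ∈ insert p (C \ {e}) :=
              Finset.mem_insert_of_mem (Finset.mem_sdiff.2 ⟨hqC, by simp [hqe]⟩)
            have hidx : (z.drop (i + 1)).findIdx (· == e) ≤ (z.drop (i + 1)).findIdx (· == q) :=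
              hmax e heC
            have hex := optR_exchange k hk (z.drop (i + 1)) (insert p (C \ {e})) e q hqA heA hidx
            have hset : insert e ((insert p (C \ {e})) \ {q}) = insert p (C \ {q}) := by
              ext x
              simp only [Finset.mem_insert, Finset.mem_sdiff, Finset.mem_singleton]
              constructor
              · rintro (rfl | ⟨(rfl | ⟨hxC, hxe⟩), hxq⟩)
                · exact Or.inr ⟨heC, fun h => hqe h.symm⟩
                · exact Or.inl rfl
                · exact Or.inr ⟨hxC, hxq⟩
              · rintro (rfl | ⟨hxC, hxq⟩)
                · exact Or.inr ⟨Or.inl rfl, fun h => hpq h⟩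
                · by_cases hxe : x = e
                  · exact Or.inl hxe
                  · exact Or.inr ⟨Or.inr ⟨hxC, hxe⟩, hxq⟩
            rw [hcc, ← hset]
            exact hex
        simp only [← hp, ← hC, if_neg hpC]
        omega

/-- The Furthest-in-the-Future algorithm minimizes the total number of page
faults over all algorithms with the same cache size. -/
theorem fif_optimal (k : ℕ) (hk : 1 ≤ k) (z : List ℕ)
    (F : PagingSchedule k z) (hF : IsFIF k z F)
    (S : PagingSchedule k z) :
    schedFaults F ≤ schedFaults S := by
  have h1 := fif_le_optR hk F hF z.length 0 (by omega)
  have h2 := optR_le_sched hk S z.length 0 (by omega)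
  rw [List.drop_zero, F.init] at h1
  rw [List.drop_zero, S.init] at h2
  rw [schedFaults_eq_sum F, schedFaults_eq_sum S, Finset.range_eq_Ico]
  omega
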